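/- arXiv:1902.08567 — 4 statements merged into one kernel-verified Lean document; each statement's English description precedes it below -/
import Mathlib

section
/- Let d ≥ 1, let M be a real symmetric positive definite d×d matrix, let β > 0, and let f : ℝᵈ × ℝ → ℝᵈ be continuous and continuously differentiable in its first argument, with spatial Jacobian Df(x,t). Assume the (constant-metric) contraction condition: for all x ∈ ℝᵈ and t ≥ 0, Df(x,t)ᵀ M + M Df(x,t) ⪯ −2β M in the sense of quadratic forms. Then for any two solutions x, y : [0,∞) → ℝᵈ of the ODE ż(t) = f(z(t), t), and all t ≥ 0, ⟨x(t) − y(t), M (x(t) − y(t))⟩ ≤ e^{−2βt} ⟨x(0) − y(0), M (x(0) − y(0))⟩. -/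
open RealInnerProductSpace

/-- Deterministic contraction (Theorem 1 of the paper) in a constant metric `M`:
if `Df(x,t)ᵀ M + M Df(x,t) ⪯ -2β M` for all `x` and `t ≥ 0`, then for any two solutions
`x, y` of `ż = f(z,t)`, the squared `M`-distance decays as `e^{-2βt}`. -/
theorem deterministic_contraction_constant_metric
    {d : ℕ} (hd : 1 ≤ d)
    (M : EuclideanSpace ℝ (Fin d) →L[ℝ] EuclideanSpace ℝ (Fin d))
    (hMsymm : ∀ v w : EuclideanSpace ℝ (Fin d), ⟪M v, w⟫ = ⟪v, M w⟫)
    (hMpos : ∀ v : EuclideanSpace ℝ (Fin d), v ≠ 0 → 0 < ⟪v, M v⟫)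
    (β : ℝ) (hβ : 0 < β)
    (f : EuclideanSpace ℝ (Fin d) → ℝ → EuclideanSpace ℝ (Fin d))
    (Df : EuclideanSpace ℝ (Fin d) → ℝ →
      (EuclideanSpace ℝ (Fin d) →L[ℝ] EuclideanSpace ℝ (Fin d)))
    (hf_cont : Continuous fun p : EuclideanSpace ℝ (Fin d) × ℝ => f p.1 p.2)
    (hf_deriv : ∀ (t : ℝ) (x : EuclideanSpace ℝ (Fin d)),
      HasFDerivAt (fun z => f z t) (Df x t) x)
    (hDf_cont : ∀ t : ℝ, Continuous fun x => Df x t)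
    (hcontr : ∀ (x : EuclideanSpace ℝ (Fin d)) (t : ℝ), 0 ≤ t →
      ∀ v : EuclideanSpace ℝ (Fin d),
        ⟪Df x t v, M v⟫ + ⟪v, M (Df x t v)⟫ ≤ -2 * β * ⟪v, M v⟫)
    (x y : ℝ → EuclideanSpace ℝ (Fin d))
    (hx : ∀ t : ℝ, 0 ≤ t → HasDerivAt x (f (x t) t) t)
    (hy : ∀ t : ℝ, 0 ≤ t → HasDerivAt y (f (y t) t) t) :
    ∀ t : ℝ, 0 ≤ t →
      ⟪x t - y t, M (x t - y t)⟫ ≤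
        Real.exp (-2 * β * t) * ⟪x 0 - y 0, M (x 0 - y 0)⟫ := by
  -- Key pointwise inequality from the contraction condition along a segment
  have key : ∀ (a b : EuclideanSpace ℝ (Fin d)) (t : ℝ), 0 ≤ t →
      ⟪a - b, M (f a t - f b t)⟫ + ⟪f a t - f b t, M (a - b)⟫
        ≤ -2 * β * ⟪a - b, M (a - b)⟫ := by
    intro a b t ht
    set v := a - b with hv
    set g : ℝ → ℝ := fun s =>
      ⟪v, M (f (b + s • v) t)⟫ + ⟪f (b + s • v) t, M v⟫ + 2 * β * s * ⟪v, M v⟫ with hgdef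
    have hc : ∀ s : ℝ, HasDerivAt (fun s : ℝ => b + s • v) v s := by
      intro s
      simpa using ((hasDerivAt_id s).smul_const v).const_add b
    have hder : ∀ s : ℝ, HasDerivAt g
        (⟪v, M (Df (b + s • v) t v)⟫ + ⟪Df (b + s • v) t v, M v⟫ + 2 * β * ⟪v, M v⟫) s := by
      intro s
      have hfc : HasDerivAt (fun s : ℝ => f (b + s • v) t) (Df (b + s • v) t v) s := by
        exact (hf_deriv t (b + s • v)).comp_hasDerivAt s (hc s)
      have hMc : HasDerivAt (fun s : ℝ => M (f (b + s • v) t))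
          (M (Df (b + s • v) t v)) s :=
        M.hasFDerivAt.comp_hasDerivAt s hfc
      have h1 : HasDerivAt (fun s : ℝ => ⟪v, M (f (b + s • v) t)⟫)
          ⟪v, M (Df (b + s • v) t v)⟫ s := by
        simpa using (hasDerivAt_const s v).inner ℝ hMc
      have h2 : HasDerivAt (fun s : ℝ => ⟪f (b + s • v) t, M v⟫)
          ⟪Df (b + s • v) t v, M v⟫ s := by
        simpa using hfc.inner ℝ (hasDerivAt_const s (M v))
      have h3 : HasDerivAt (fun s : ℝ => 2 * β * s * ⟪v, M v⟫) (2 * β * ⟪v, M v⟫) s := by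
        have : HasDerivAt (fun s : ℝ => s) 1 s := hasDerivAt_id s
        simpa [mul_comm, mul_assoc, mul_left_comm] using
          ((this.const_mul (2 * β)).mul_const ⟪v, M v⟫)
      exact (h1.add h2).add h3
    have hderiv_nonpos : ∀ s : ℝ,
        ⟪v, M (Df (b + s • v) t v)⟫ + ⟪Df (b + s • v) t v, M v⟫ + 2 * β * ⟪v, M v⟫ ≤ 0 := by
      intro s
      have h := hcontr (b + s • v) t ht v
      linarith
    have hmono : g 1 ≤ g 0 := by
      have : AntitoneOn g (Set.Icc 0 1) := by
        apply antitoneOn_of_deriv_nonpos (convex_Icc 0 1)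
        · exact (continuous_iff_continuousAt.2 fun s => (hder s).continuousAt).continuousOn
        · intro s _
          exact ((hder s).differentiableAt).differentiableWithinAt
        · intro s _
          rw [(hder s).deriv]
          exact hderiv_nonpos s
      exact this (Set.left_mem_Icc.2 zero_le_one) (Set.right_mem_Icc.2 zero_le_one) zero_le_one
    have h0 : g 0 = ⟪v, M (f b t)⟫ + ⟪f b t, M v⟫ := by simp [hgdef]
    have h1 : g 1 = ⟪v, M (f a t)⟫ + ⟪f a t, M v⟫ + 2 * β * ⟪v, M v⟫ := by
      simp [hgdef, hv]
    rw [h0, h1] at hmono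
    have expand : ⟪v, M (f a t - f b t)⟫ + ⟪f a t - f b t, M v⟫
        = (⟪v, M (f a t)⟫ + ⟪f a t, M v⟫) - (⟪v, M (f b t)⟫ + ⟪f b t, M v⟫) := by
      simp [map_sub, inner_sub_left, inner_sub_right]
      ring
    rw [expand]
    linarith
  -- now the Gronwall argument
  intro T hT
  set e : ℝ → EuclideanSpace ℝ (Fin d) := fun t => x t - y t with he
  set V : ℝ → ℝ := fun t => ⟪e t, M (e t)⟫ with hV
  have hVder : ∀ t : ℝ, 0 ≤ t → HasDerivAt V
      (⟪e t, M (f (x t) t - f (y t) t)⟫ + ⟪f (x t) t - f (y t) t, M (e t)⟫) t := by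
    intro t ht
    have he' : HasDerivAt e (f (x t) t - f (y t) t) t := (hx t ht).sub (hy t ht)
    have hMe : HasDerivAt (fun t => M (e t)) (M (f (x t) t - f (y t) t)) t :=
      M.hasFDerivAt.comp_hasDerivAt t he'
    exact he'.inner ℝ hMe
  set W : ℝ → ℝ := fun t => Real.exp (2 * β * t) * V t with hW
  have hWder : ∀ t : ℝ, 0 ≤ t → HasDerivAt W
      (Real.exp (2 * β * t) * (2 * β * V t +
        (⟪e t, M (f (x t) t - f (y t) t)⟫ + ⟪f (x t) t - f (y t) t, M (e t)⟫))) t := by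
    intro t ht
    have hexp : HasDerivAt (fun t : ℝ => Real.exp (2 * β * t)) (2 * β * Real.exp (2 * β * t)) t := by
      have := ((hasDerivAt_id t).const_mul (2 * β)).exp
      simpa [mul_comm] using this
    have := hexp.mul (hVder t ht)
    exact this.congr_deriv (by ring)
  have hWmono : AntitoneOn W (Set.Ici (0 : ℝ)) := by
    apply antitoneOn_of_deriv_nonpos (convex_Ici 0)
    · intro t ht
      exact ((hWder t ht).continuousAt).continuousWithinAt
    · intro t ht
      rw [interior_Ici] at ht
      exact ((hWder t ht.le).differentiableAt).differentiableWithinAt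
    · intro t ht
      rw [interior_Ici] at ht
      rw [(hWder t ht.le).deriv]
      have hk := key (x t) (y t) t ht.le
      have hVt : V t = ⟪x t - y t, M (x t - y t)⟫ := rfl
      have : 2 * β * V t +
          (⟪e t, M (f (x t) t - f (y t) t)⟫ + ⟪f (x t) t - f (y t) t, M (e t)⟫) ≤ 0 := by
        simp only [he, hV]
        linarith
      exact mul_nonpos_of_nonneg_of_nonpos (Real.exp_pos _).le this
  have hle : W T ≤ W 0 := hWmono (Set.mem_Ici.2 le_rfl) (Set.mem_Ici.2 hT) hT
  have hW0 : W 0 = V 0 := by simp [hW]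
  have hWT : W T = Real.exp (2 * β * T) * V T := rfl
  rw [hW0, hWT] at hle
  have hexppos : (0:ℝ) < Real.exp (2 * β * T) := Real.exp_pos _
  have : V T ≤ Real.exp (-2 * β * T) * V 0 := by
    rw [show (-2 : ℝ) * β * T = -(2 * β * T) by ring, Real.exp_neg]
    have h2 : V T * Real.exp (2 * β * T) ≤ V 0 := by linarith [hle]
    have h3 := (le_div_iff₀ hexppos).mpr h2
    simpa [div_eq_inv_mul] using h3
  simpa [hV, he] using this
end

section
/- Let d ≥ 1, let α > 0, β > 0, and let M : [0,∞) → ℝ^{d×d} be a continuously differentiable family of symmetric matrices with M(t) ⪰ α I for all t ≥ 0. Let f : ℝᵈ × ℝ → ℝᵈ be continuous and continuously differentiable in its first argument, with spatial Jacobian Df(x,t), and assume the time-varying-metric contraction condition: for all x ∈ ℝᵈ and t ≥ 0, Ṁ(t) + Df(x,t)ᵀ M(t) + M(t) Df(x,t) ⪯ −2β M(t). Then for any two solutions x, y : [0,∞) → ℝᵈ of ż(t) = f(z(t), t) and all t ≥ 0, ⟨x(t) − y(t), M(t)(x(t) − y(t))⟩ ≤ e^{−2βt} ⟨x(0) − y(0),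 M(0)(x(0) − y(0))⟩, and consequently ‖x(t) − y(t)‖² ≤ α^{−1} e^{−2βt} ⟨x(0) − y(0), M(0)(x(0) − y(0))⟩. -/
open RealInnerProductSpace

/-- Deterministic contraction (Theorem 1 of the paper) in a time-varying, uniformly positive
definite metric `M(t) ⪰ α I`: if `Ṁ(t) + Df(x,t)ᵀ M(t) + M(t) Df(x,t) ⪯ -2β M(t)`, then for any
two solutions `x, y` of `ż = f(z,t)`, the squared `M(t)`-distance decays as `e^{-2βt}`, and hence
`‖x(t) - y(t)‖² ≤ α⁻¹ e^{-2βt} ⟨x(0)-y(0), M(0)(x(0)-y(0))⟩`. -/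
theorem deterministic_contraction_time_varying_metric
    {d : ℕ} (hd : 1 ≤ d) (α β : ℝ) (hα : 0 < α) (hβ : 0 < β)
    (M M' : ℝ → (EuclideanSpace ℝ (Fin d) →L[ℝ] EuclideanSpace ℝ (Fin d)))
    (hM_deriv : ∀ t : ℝ, 0 ≤ t → HasDerivAt M (M' t) t)
    (hM'_cont : Continuous M')
    (hM_symm : ∀ (t : ℝ) (v w : EuclideanSpace ℝ (Fin d)), ⟪M t v, w⟫ = ⟪v, M t w⟫)
    (hM_lb : ∀ t : ℝ, 0 ≤ t → ∀ v : EuclideanSpace ℝ (Fin d), α * ‖v‖ ^ 2 ≤ ⟪v, M t v⟫)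
    (f : EuclideanSpace ℝ (Fin d) → ℝ → EuclideanSpace ℝ (Fin d))
    (Df : EuclideanSpace ℝ (Fin d) → ℝ →
      (EuclideanSpace ℝ (Fin d) →L[ℝ] EuclideanSpace ℝ (Fin d)))
    (hf_cont : Continuous fun p : EuclideanSpace ℝ (Fin d) × ℝ => f p.1 p.2)
    (hf_deriv : ∀ (t : ℝ) (x : EuclideanSpace ℝ (Fin d)),
      HasFDerivAt (fun z => f z t) (Df x t) x)
    (hDf_cont : ∀ t : ℝ, Continuous fun x => Df x t)
    (hcontr : ∀ (x : EuclideanSpace ℝ (Fin d)) (t : ℝ), 0 ≤ t →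
      ∀ v : EuclideanSpace ℝ (Fin d),
        ⟪v, M' t v⟫ + ⟪Df x t v, M t v⟫ + ⟪v, M t (Df x t v)⟫ ≤ -2 * β * ⟪v, M t v⟫)
    (x y : ℝ → EuclideanSpace ℝ (Fin d))
    (hx : ∀ t : ℝ, 0 ≤ t → HasDerivAt x (f (x t) t) t)
    (hy : ∀ t : ℝ, 0 ≤ t → HasDerivAt y (f (y t) t) t) :
    ∀ t : ℝ, 0 ≤ t →
      ⟪x t - y t, M t (x t - y t)⟫ ≤
          Real.exp (-2 * β * t) * ⟪x 0 - y 0, M 0 (x 0 - y 0)⟫ ∧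
        ‖x t - y t‖ ^ 2 ≤
          α⁻¹ * (Real.exp (-2 * β * t) * ⟪x 0 - y 0, M 0 (x 0 - y 0)⟫) := by
  -- Key pointwise inequality via a mean-value argument along the segment from b to a.
  have key : ∀ (t : ℝ), 0 ≤ t → ∀ a b : EuclideanSpace ℝ (Fin d),
      ⟪a - b, M' t (a - b)⟫ + ⟪f a t - f b t, M t (a - b)⟫
        + ⟪a - b, M t (f a t - f b t)⟫ ≤ -2 * β * ⟪a - b, M t (a - b)⟫ := by
    intro t ht a b
    set v : EuclideanSpace ℝ (Fin d) := a - b with hv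
    set φ : ℝ → ℝ := fun s =>
      s * ⟪v, M' t v⟫ + ⟪f (b + s • v) t - f b t, M t v⟫
        + ⟪v, M t (f (b + s • v) t - f b t)⟫ + s * (2 * β * ⟪v, M t v⟫) with hφ
    have hline : ∀ s : ℝ, HasDerivAt (fun s : ℝ => b + s • v) v s := by
      intro s
      simpa using ((hasDerivAt_id s).smul_const v).const_add b
    have hψ : ∀ s : ℝ, HasDerivAt (fun s : ℝ => f (b + s • v) t)
        (Df (b + s • v) t v) s := by
      intro s
      exact (hf_deriv t (b + s • v)).comp_hasDerivAt s (hline s)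
    have hφd : ∀ s : ℝ, HasDerivAt φ
        (⟪v, M' t v⟫ + ⟪Df (b + s • v) t v, M t v⟫
          + ⟪v, M t (Df (b + s • v) t v)⟫ + 2 * β * ⟪v, M t v⟫) s := by
      intro s
      have h1 : HasDerivAt (fun s : ℝ => s * ⟪v, M' t v⟫) ⟪v, M' t v⟫ s := by
        simpa using (hasDerivAt_id s).mul_const ⟪v, M' t v⟫
      have h2 : HasDerivAt (fun s : ℝ => ⟪f (b + s • v) t - f b t, M t v⟫)
          ⟪Df (b + s • v) t v, M t v⟫ s := by
        have := HasDerivAt.inner ℝ ((hψ s).sub_const (f b t)) (hasDerivAt_const s (M t v))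
        simpa using this
      have h3 : HasDerivAt (fun s : ℝ => ⟪v, M t (f (b + s • v) t - f b t)⟫)
          ⟪v, M t (Df (b + s • v) t v)⟫ s := by
        have hm : HasDerivAt (fun s : ℝ => M t (f (b + s • v) t - f b t))
            (M t (Df (b + s • v) t v)) s :=
          (M t).hasFDerivAt.comp_hasDerivAt s ((hψ s).sub_const (f b t))
        have := HasDerivAt.inner ℝ (hasDerivAt_const s v) hm
        simpa using this
      have h4 : HasDerivAt (fun s : ℝ => s * (2 * β * ⟪v, M t v⟫))
          (2 * β * ⟪v, M t v⟫) s := by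
        simpa using (hasDerivAt_id s).mul_const (2 * β * ⟪v, M t v⟫)
      exact ((h1.add h2).add h3).add h4
    have hmono : Antitone φ := by
      refine antitone_of_deriv_nonpos (fun s => (hφd s).differentiableAt) (fun s => ?_)
      rw [(hφd s).deriv]
      have := hcontr (b + s • v) t ht v
      nlinarith [this]
    have h10 : φ 1 ≤ φ 0 := hmono (by norm_num)
    have hφ0 : φ 0 = 0 := by simp [hφ]
    have hφ1 : φ 1 = ⟪v, M' t v⟫ + ⟪f a t - f b t, M t v⟫
        + ⟪v, M t (f a t - f b t)⟫ + 2 * β * ⟪v, M t v⟫ := by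
      have hba : b + (1:ℝ) • v = a := by rw [hv]; simp
      simp only [hφ, hba, one_mul]
    rw [hφ0, hφ1] at h10
    linarith
  -- the Lyapunov function
  set V : ℝ → ℝ := fun t => ⟪x t - y t, M t (x t - y t)⟫ with hV
  have hVd : ∀ t : ℝ, 0 ≤ t → HasDerivAt V
      (⟪x t - y t, M' t (x t - y t)⟫ + ⟪f (x t) t - f (y t) t, M t (x t - y t)⟫
        + ⟪x t - y t, M t (f (x t) t - f (y t) t)⟫) t := by
    intro t ht
    have hvd : HasDerivAt (fun t => x t - y t) (f (x t) t - f (y t) t) t :=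
      (hx t ht).sub (hy t ht)
    have hm : HasDerivAt (fun t => M t (x t - y t))
        (M' t (x t - y t) + M t (f (x t) t - f (y t) t)) t :=
      (hM_deriv t ht).clm_apply hvd
    have := HasDerivAt.inner ℝ hvd hm
    simp only [inner_add_right] at this
    exact this.congr_deriv (by ring)
  set g : ℝ → ℝ := fun t => Real.exp (2 * β * t) * V t with hg
  have hgd : ∀ t : ℝ, 0 ≤ t → HasDerivAt g
      (Real.exp (2 * β * t) * (2 * β * V t
        + (⟪x t - y t, M' t (x t - y t)⟫ + ⟪f (x t) t - f (y t) t, M t (x t - y t)⟫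
          + ⟪x t - y t, M t (f (x t) t - f (y t) t)⟫))) t := by
    intro t ht
    have he : HasDerivAt (fun t => Real.exp (2 * β * t)) (2 * β * Real.exp (2 * β * t)) t := by
      have := ((hasDerivAt_id t).const_mul (2 * β)).exp
      simpa [mul_comm] using this
    have := he.mul (hVd t ht)
    exact this.congr_deriv (by ring)
  have hganti : AntitoneOn g (Set.Ici (0 : ℝ)) := by
    refine antitoneOn_of_deriv_nonpos (convex_Ici 0) ?_ ?_ ?_
    · intro t ht
      exact (hgd t ht).continuousAt.continuousWithinAt
    · intro t ht
      rw [interior_Ici] at ht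
      exact ((hgd t (le_of_lt ht)).differentiableAt).differentiableWithinAt
    · intro t ht
      rw [interior_Ici] at ht
      have ht' : (0:ℝ) ≤ t := le_of_lt ht
      rw [(hgd t ht').deriv]
      have hk := key t ht' (x t) (y t)
      have hexp : (0:ℝ) < Real.exp (2 * β * t) := Real.exp_pos _
      have : 2 * β * V t + (⟪x t - y t, M' t (x t - y t)⟫
          + ⟪f (x t) t - f (y t) t, M t (x t - y t)⟫
          + ⟪x t - y t, M t (f (x t) t - f (y t) t)⟫) ≤ 0 := by
        simp only [hV]; nlinarith [hk]
      exact mul_nonpos_of_nonneg_of_nonpos hexp.le this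
  intro t ht
  have hgle : g t ≤ g 0 := hganti (Set.self_mem_Ici) ht ht
  have hV0 : g 0 = V 0 := by simp [hg]
  have h1 : V t ≤ Real.exp (-2 * β * t) * V 0 := by
    have hexp : (0:ℝ) < Real.exp (2 * β * t) := Real.exp_pos _
    rw [hV0] at hgle
    rw [show (-2 : ℝ) * β * t = -(2 * β * t) by ring, Real.exp_neg, inv_mul_eq_div,
      le_div_iff₀ hexp]
    calc V t * Real.exp (2 * β * t) = g t := mul_comm _ _
      _ ≤ V 0 := hgle
  refine ⟨h1, ?_⟩
  have h2 := hM_lb t ht (x t - y t)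
  calc ‖x t - y t‖ ^ 2 = α⁻¹ * (α * ‖x t - y t‖ ^ 2) := by field_simp
    _ ≤ α⁻¹ * V t := by
        apply mul_le_mul_of_nonneg_left h2 (by positivity)
    _ ≤ α⁻¹ * (Real.exp (-2 * β * t) * ⟪x 0 - y 0, M 0 (x 0 - y 0)⟫) := by
        apply mul_le_mul_of_nonneg_left h1 (by positivity)
end

section
/- Let d ≥ 1, let M be a real symmetric positive definite d×d matrix, let β > 0, and let f : ℝᵈ → ℝᵈ be continuously differentiable with Jacobian Df. If Df(x)ᵀ M + M Df(x) ⪯ −2β M for all x ∈ ℝᵈ, then f satisfies the incremental (one-sided Lipschitz) estimate ⟨f(x) − f(y), M(x − y)⟩ ≤ −β ⟨x − y, M(x − y)⟩ for all x, y ∈ ℝᵈ. -/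
open RealInnerProductSpace

/-- If the Jacobian of a `C¹` vector field `f` satisfies `Df(x)ᵀ M + M Df(x) ⪯ -2β M` in a
symmetric positive definite metric `M`, then `f` satisfies the incremental (one-sided Lipschitz)
estimate `⟨f(x) - f(y), M(x - y)⟩ ≤ -β ⟨x - y, M(x - y)⟩`. -/
theorem jacobian_contraction_implies_incremental
    {d : ℕ} (hd : 1 ≤ d)
    (M : EuclideanSpace ℝ (Fin d) →L[ℝ] EuclideanSpace ℝ (Fin d))
    (hMsymm : ∀ v w : EuclideanSpace ℝ (Fin d), ⟪M v, w⟫ = ⟪v, M w⟫)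
    (hMpos : ∀ v : EuclideanSpace ℝ (Fin d), v ≠ 0 → 0 < ⟪v, M v⟫)
    (β : ℝ) (hβ : 0 < β)
    (f : EuclideanSpace ℝ (Fin d) → EuclideanSpace ℝ (Fin d))
    (hf : ContDiff ℝ 1 f)
    (hcontr : ∀ x v : EuclideanSpace ℝ (Fin d),
      ⟪fderiv ℝ f x v, M v⟫ + ⟪v, M (fderiv ℝ f x v)⟫ ≤ -2 * β * ⟪v, M v⟫) :
    ∀ x y : EuclideanSpace ℝ (Fin d),
      ⟪f x - f y, M (x - y)⟫ ≤ -β * ⟪x - y, M (x - y)⟫ := by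
  intro x y
  set v := x - y with hv
  have hdiff : Differentiable ℝ f := hf.differentiable one_ne_zero
  -- derivative of t ↦ ⟪M v, f (y + t • v)⟫
  have hderiv : ∀ t : ℝ, HasDerivAt (fun t : ℝ => ⟪M v, f (y + t • v)⟫)
      ⟪M v, fderiv ℝ f (y + t • v) v⟫ t := by
    intro t
    have h1 : HasDerivAt (fun t : ℝ => y + t • v) v t := by
      simpa using ((hasDerivAt_id t).smul_const v).const_add y
    have h2 : HasDerivAt (fun t : ℝ => f (y + t • v)) (fderiv ℝ f (y + t • v) v) t :=
      (hdiff (y + t • v)).hasFDerivAt.comp_hasDerivAt t h1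
    exact (innerSL ℝ (M v)).hasFDerivAt.comp_hasDerivAt t h2
  have key : ∀ z : EuclideanSpace ℝ (Fin d),
      ⟪M v, fderiv ℝ f z v⟫ ≤ -β * ⟪v, M v⟫ := by
    intro z
    have h1 := hcontr z v
    have h2 := hMsymm v (fderiv ℝ f z v)
    have h3 := real_inner_comm (fderiv ℝ f z v) (M v)
    linarith
  obtain ⟨c, _, hceq⟩ := exists_hasDerivAt_eq_slope
    (fun t : ℝ => ⟪M v, f (y + t • v)⟫)
    (fun t : ℝ => ⟪M v, fderiv ℝ f (y + t • v) v⟫) one_pos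
    ((continuous_iff_continuousAt.2 fun t => (hderiv t).continuousAt).continuousOn)
    (fun t _ => hderiv t)
  have hx : y + (1 : ℝ) • v = x := by simp [hv]
  have hy : y + (0 : ℝ) • v = y := by simp
  have hslope : ⟪M v, fderiv ℝ f (y + c • v) v⟫ = ⟪M v, f x⟫ - ⟪M v, f y⟫ := by
    rw [hceq, hx, hy]
    ring
  have hb := key (y + c • v)
  have hfin : ⟪f x - f y, M v⟫ = ⟪M v, f x⟫ - ⟪M v, f y⟫ := by
    rw [inner_sub_left, real_inner_comm (f x) (M v), real_inner_comm (f y) (M v)]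
  linarith [hfin, hslope, hb]
end

section
/- Under the hypotheses of the previous statement (a Markov kernel P from ℝᵈ × ℝᵈ to ℝᵈ × ℝᵈ with ∫ ‖x − y‖² P(z₀, d(x,y)) ≤ α^{−1}(e^{−2βt}‖x₀ − y₀‖² + C/β) for all z₀ = (x₀,y₀), where α, β > 0 and C ≥ 0), and assuming in addition that the marginals μ_t and ν_t of π_t = ∫ P(z₀, ·) dπ₀(z₀) do not depend on the choice of coupling π₀ of μ₀ and ν₀, the time-t laws satisfy the Wasserstein contraction inequality W₂(μ_t, ν_t) ≤ α^{−1/2}(e^{−βt} W₂(μ₀, ν₀) + √(C/β)). -/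
open MeasureTheory ProbabilityTheory Filter Topology
open scoped ENNReal NNReal

/-- The 2-Wasserstein distance between two measures on a normed space: the infimum over all
couplings `π` (joint measures with the given marginals) of `(∫ ‖x - y‖² dπ)^{1/2}`. -/
noncomputable def W2 {E : Type*} [NormedAddCommGroup E] [MeasurableSpace E]
    (μ ν : Measure E) : ℝ :=
  Real.sqrt (sInf {I : ℝ≥0∞ | ∃ π : Measure (E × E), IsProbabilityMeasure π ∧
    π.map Prod.fst = μ ∧ π.map Prod.snd = ν ∧
    I = ∫⁻ p, (‖p.1 - p.2‖₊ : ℝ≥0∞) ^ 2 ∂π}).toReal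

private lemma sqrt_add_le_aux {a b : ℝ} (ha : 0 ≤ a) (hb : 0 ≤ b) :
    Real.sqrt (a + b) ≤ Real.sqrt a + Real.sqrt b := by
  have h := Real.sqrt_le_sqrt (show a + b ≤ (Real.sqrt a + Real.sqrt b) ^ 2 by
    nlinarith [Real.sq_sqrt ha, Real.sq_sqrt hb, Real.sqrt_nonneg a, Real.sqrt_nonneg b])
  rwa [Real.sqrt_sq (by positivity)] at h

private lemma W2_aux {E : Type*} [NormedAddCommGroup E] [MeasurableSpace E] [BorelSpace E]
    [SecondCountableTopology E]
    (α β C t : ℝ) (hα : 0 < α) (hβ : 0 < β) (hC : 0 ≤ C)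
    (P : Kernel (E × E) (E × E)) [IsMarkovKernel P]
    (hP : ∀ z₀ : E × E, (∫⁻ p, (‖p.1 - p.2‖₊ : ℝ≥0∞) ^ 2 ∂(P z₀)) ≤
        ENNReal.ofReal (α⁻¹ * (Real.exp (-2 * β * t) * ‖z₀.1 - z₀.2‖ ^ 2 + C / β)))
    (μ₀ ν₀ : Measure E)
    (hμ₀_prob : IsProbabilityMeasure μ₀) (hν₀_prob : IsProbabilityMeasure ν₀)
    (hμ₀_mom : (∫⁻ x, (‖x‖₊ : ℝ≥0∞) ^ 2 ∂μ₀) < ⊤)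
    (hν₀_mom : (∫⁻ x, (‖x‖₊ : ℝ≥0∞) ^ 2 ∂ν₀) < ⊤)
    (μt νt : Measure E)
    (hmarg : ∀ π₀ : Measure (E × E), IsProbabilityMeasure π₀ → π₀.map Prod.fst = μ₀ →
      π₀.map Prod.snd = ν₀ →
        (π₀.bind fun z => P z).map Prod.fst = μt ∧
          (π₀.bind fun z => P z).map Prod.snd = νt) :
    W2 μt νt ≤ (Real.sqrt α)⁻¹ * (Real.exp (-β * t) * W2 μ₀ ν₀ + Real.sqrt (C / β)) := by
  have hA : (0:ℝ) < Real.exp (-2 * β * t) := Real.exp_pos _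
  have hB : (0:ℝ) ≤ C / β := div_nonneg hC hβ.le
  set A : ℝ := Real.exp (-2 * β * t) with hAdef
  have hg : Measurable fun p : E × E => ((‖p.1 - p.2‖₊ : ℝ≥0∞) ^ 2) := by
    fun_prop
  have hg1 : Measurable fun p : E × E => ((‖p.1‖₊ : ℝ≥0∞) ^ 2) := by fun_prop
  have hg2 : Measurable fun p : E × E => ((‖p.2‖₊ : ℝ≥0∞) ^ 2) := by fun_prop
  have hofReal : ∀ v : E, (‖v‖₊ : ℝ≥0∞) ^ 2 = ENNReal.ofReal (‖v‖ ^ 2) := fun v => by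
    rw [ENNReal.ofReal_pow (norm_nonneg _), ofReal_norm_eq_enorm, enorm_eq_nnnorm]
  set S₀ : Set ℝ≥0∞ := {I : ℝ≥0∞ | ∃ π : Measure (E × E), IsProbabilityMeasure π ∧
    π.map Prod.fst = μ₀ ∧ π.map Prod.snd = ν₀ ∧
    I = ∫⁻ p, (‖p.1 - p.2‖₊ : ℝ≥0∞) ^ 2 ∂π} with hS₀def
  set St : Set ℝ≥0∞ := {I : ℝ≥0∞ | ∃ π : Measure (E × E), IsProbabilityMeasure π ∧
    π.map Prod.fst = μt ∧ π.map Prod.snd = νt ∧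
    I = ∫⁻ p, (‖p.1 - p.2‖₊ : ℝ≥0∞) ^ 2 ∂π} with hStdef
  have hW2t : W2 μt νt = Real.sqrt (sInf St).toReal := rfl
  have hW20 : W2 μ₀ ν₀ = Real.sqrt (sInf S₀).toReal := rfl
  -- finiteness of sInf S₀ via the product coupling
  have hprod_fst : (μ₀.prod ν₀).map Prod.fst = μ₀ := by
    simp [Measure.map_fst_prod]
  have hprod_snd : (μ₀.prod ν₀).map Prod.snd = ν₀ := by
    simp [Measure.map_snd_prod]
  have hI₀fin : sInf S₀ < ⊤ := by
    have hpt : ∀ p : E × E, (‖p.1 - p.2‖₊ : ℝ≥0∞) ^ 2 ≤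
        4 * ((‖p.1‖₊ : ℝ≥0∞) ^ 2 + (‖p.2‖₊ : ℝ≥0∞) ^ 2) := by
      intro p
      calc (‖p.1 - p.2‖₊ : ℝ≥0∞) ^ 2 = ENNReal.ofReal (‖p.1 - p.2‖ ^ 2) := hofReal _
        _ ≤ ENNReal.ofReal (4 * (‖p.1‖ ^ 2 + ‖p.2‖ ^ 2)) := by
            refine ENNReal.ofReal_le_ofReal ?_
            nlinarith [norm_sub_le p.1 p.2, norm_nonneg p.1, norm_nonneg p.2,
              norm_nonneg (p.1 - p.2), sq_nonneg (‖p.1‖ - ‖p.2‖), sq_nonneg (‖p.1‖ + ‖p.2‖)]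
        _ = 4 * ((‖p.1‖₊ : ℝ≥0∞) ^ 2 + (‖p.2‖₊ : ℝ≥0∞) ^ 2) := by
            rw [ENNReal.ofReal_mul (by norm_num),
              ENNReal.ofReal_add (sq_nonneg _) (sq_nonneg _), hofReal, hofReal]
            norm_num
    have hcost : (∫⁻ p, (‖p.1 - p.2‖₊ : ℝ≥0∞) ^ 2 ∂(μ₀.prod ν₀)) < ⊤ := by
      have h1 : (∫⁻ p : E × E, (‖p.1‖₊ : ℝ≥0∞) ^ 2 ∂(μ₀.prod ν₀)) =
          ∫⁻ x, (‖x‖₊ : ℝ≥0∞) ^ 2 ∂μ₀ := by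
        conv_rhs => rw [← hprod_fst]
        rw [lintegral_map (by fun_prop) measurable_fst]
      have h2 : (∫⁻ p : E × E, (‖p.2‖₊ : ℝ≥0∞) ^ 2 ∂(μ₀.prod ν₀)) =
          ∫⁻ x, (‖x‖₊ : ℝ≥0∞) ^ 2 ∂ν₀ := by
        conv_rhs => rw [← hprod_snd]
        rw [lintegral_map (by fun_prop) measurable_snd]
      calc (∫⁻ p, (‖p.1 - p.2‖₊ : ℝ≥0∞) ^ 2 ∂(μ₀.prod ν₀))
          ≤ ∫⁻ p : E × E, 4 * ((‖p.1‖₊ : ℝ≥0∞) ^ 2 + (‖p.2‖₊ : ℝ≥0∞) ^ 2) ∂(μ₀.prod ν₀) :=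
            lintegral_mono hpt
        _ = 4 * ((∫⁻ x, (‖x‖₊ : ℝ≥0∞) ^ 2 ∂μ₀) + ∫⁻ x, (‖x‖₊ : ℝ≥0∞) ^ 2 ∂ν₀) := by
            rw [lintegral_const_mul _ (by fun_prop), lintegral_add_left hg1, h1, h2]
        _ < ⊤ := by
            refine ENNReal.mul_lt_top (by norm_num) ?_
            exact ENNReal.add_lt_top.mpr ⟨hμ₀_mom, hν₀_mom⟩
    exact lt_of_le_of_lt (sInf_le ⟨μ₀.prod ν₀, inferInstance, hprod_fst, hprod_snd, rfl⟩) hcost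
  have hI₀ne : sInf S₀ ≠ ⊤ := hI₀fin.ne
  -- the basic bound, for every coupling of the initial laws
  have bound : ∀ π₀ : Measure (E × E), IsProbabilityMeasure π₀ → π₀.map Prod.fst = μ₀ →
      π₀.map Prod.snd = ν₀ →
      sInf St ≤ ENNReal.ofReal α⁻¹ *
        (ENNReal.ofReal A * (∫⁻ p, (‖p.1 - p.2‖₊ : ℝ≥0∞) ^ 2 ∂π₀) + ENNReal.ofReal (C / β)) := by
    intro π₀ hπ₀ hfstm hsndm
    obtain ⟨hfst, hsnd⟩ := hmarg π₀ hπ₀ hfstm hsndm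
    have hπt : IsProbabilityMeasure (π₀.bind fun z => P z) := by
      constructor
      rw [Measure.bind_apply MeasurableSet.univ P.measurable.aemeasurable]
      simp
    have hmem : (∫⁻ p, (‖p.1 - p.2‖₊ : ℝ≥0∞) ^ 2 ∂(π₀.bind fun z => P z)) ∈ St :=
      ⟨_, hπt, hfst, hsnd, rfl⟩
    refine le_trans (sInf_le hmem) ?_
    rw [Measure.lintegral_bind P.measurable.aemeasurable hg.aemeasurable]
    calc (∫⁻ z, ∫⁻ p, (‖p.1 - p.2‖₊ : ℝ≥0∞) ^ 2 ∂(P z) ∂π₀)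
        ≤ ∫⁻ z, ENNReal.ofReal (α⁻¹ * (A * ‖z.1 - z.2‖ ^ 2 + C / β)) ∂π₀ :=
          lintegral_mono fun z => hP z
      _ = ∫⁻ z, ENNReal.ofReal α⁻¹ *
            (ENNReal.ofReal A * (‖z.1 - z.2‖₊ : ℝ≥0∞) ^ 2 + ENNReal.ofReal (C / β)) ∂π₀ := by
          congr 1
          funext z
          rw [ENNReal.ofReal_mul (inv_nonneg.mpr hα.le),
            ENNReal.ofReal_add (mul_nonneg hA.le (sq_nonneg _)) hB,
            ENNReal.ofReal_mul hA.le, hofReal]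
      _ = ENNReal.ofReal α⁻¹ *
            (ENNReal.ofReal A * (∫⁻ p, (‖p.1 - p.2‖₊ : ℝ≥0∞) ^ 2 ∂π₀) +
              ENNReal.ofReal (C / β)) := by
          rw [lintegral_const_mul _ (by fun_prop), lintegral_add_right _ measurable_const,
            lintegral_const_mul _ hg, lintegral_const, measure_univ, mul_one]
  -- the key estimate in ℝ≥0∞
  have key : sInf St ≤ ENNReal.ofReal α⁻¹ *
      (ENNReal.ofReal A * sInf S₀ + ENNReal.ofReal (C / β)) := by
    refine ENNReal.le_of_forall_pos_le_add fun ε hε _ => ?_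
    set δ : ℝ := ε * (α * Real.exp (2 * β * t)) with hδdef
    have hδpos : 0 < δ :=
      mul_pos (by exact_mod_cast hε) (mul_pos hα (Real.exp_pos _))
    have hlt : sInf S₀ < sInf S₀ + ENNReal.ofReal δ :=
      ENNReal.lt_add_right hI₀ne (ENNReal.ofReal_pos.mpr hδpos).ne'
    obtain ⟨J, hJmem, hJlt⟩ := sInf_lt_iff.mp hlt
    obtain ⟨π₀, hπ₀, h1, h2, rfl⟩ := hJmem
    refine (bound π₀ hπ₀ h1 h2).trans ?_
    have step : ENNReal.ofReal α⁻¹ *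
          (ENNReal.ofReal A * (∫⁻ p, (‖p.1 - p.2‖₊ : ℝ≥0∞) ^ 2 ∂π₀) + ENNReal.ofReal (C / β)) ≤
        ENNReal.ofReal α⁻¹ *
          (ENNReal.ofReal A * (sInf S₀ + ENNReal.ofReal δ) + ENNReal.ofReal (C / β)) := by
      gcongr
    refine step.trans ?_
    have hcalc : ENNReal.ofReal α⁻¹ *
          (ENNReal.ofReal A * (sInf S₀ + ENNReal.ofReal δ) + ENNReal.ofReal (C / β)) =
        ENNReal.ofReal α⁻¹ * (ENNReal.ofReal A * sInf S₀ + ENNReal.ofReal (C / β)) +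
          ENNReal.ofReal α⁻¹ * (ENNReal.ofReal A * ENNReal.ofReal δ) := by
      ring
    rw [hcalc]
    refine add_le_add le_rfl ?_
    have hAe : A * Real.exp (2 * β * t) = 1 := by
      rw [hAdef, ← Real.exp_add]; norm_num
    have hval : α⁻¹ * (A * δ) = ε := by
      have h1 : α⁻¹ * (A * δ) = (α⁻¹ * α) * ((A * Real.exp (2 * β * t)) * ε) := by
        rw [hδdef]; ring
      rw [h1, hAe, inv_mul_cancel₀ hα.ne']; ring
    rw [← ENNReal.ofReal_mul hA.le, ← ENNReal.ofReal_mul (inv_nonneg.mpr hα.le), hval,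
      ENNReal.ofReal_coe_nnreal]
  -- pass to real numbers
  set target : ℝ≥0∞ := ENNReal.ofReal α⁻¹ *
      (ENNReal.ofReal A * sInf S₀ + ENNReal.ofReal (C / β)) with htargetdef
  have htarget_ne : target ≠ ⊤ := by
    refine ENNReal.mul_ne_top ENNReal.ofReal_ne_top ?_
    exact ENNReal.add_ne_top.mpr ⟨ENNReal.mul_ne_top ENNReal.ofReal_ne_top hI₀ne,
      ENNReal.ofReal_ne_top⟩
  have htoReal : target.toReal = α⁻¹ * (A * (sInf S₀).toReal + C / β) := by
    rw [htargetdef, ENNReal.toReal_mul,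
      ENNReal.toReal_add (ENNReal.mul_ne_top ENNReal.ofReal_ne_top hI₀ne) ENNReal.ofReal_ne_top,
      ENNReal.toReal_mul, ENNReal.toReal_ofReal (inv_nonneg.mpr hα.le),
      ENNReal.toReal_ofReal hA.le, ENNReal.toReal_ofReal hB]
  have hIt : (sInf St).toReal ≤ α⁻¹ * (A * (sInf S₀).toReal + C / β) := by
    rw [← htoReal]
    exact ENNReal.toReal_mono htarget_ne key
  set I₀r : ℝ := (sInf S₀).toReal with hI₀r
  have hI₀r_nonneg : 0 ≤ I₀r := ENNReal.toReal_nonneg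
  rw [hW2t, hW20]
  have hsq : Real.sqrt (sInf St).toReal ≤ Real.sqrt (α⁻¹ * (A * I₀r + C / β)) :=
    Real.sqrt_le_sqrt hIt
  refine hsq.trans ?_
  have hsplit : Real.sqrt (α⁻¹ * (A * I₀r + C / β)) =
      (Real.sqrt α)⁻¹ * Real.sqrt (A * I₀r + C / β) := by
    rw [Real.sqrt_mul (inv_nonneg.mpr hα.le), Real.sqrt_inv]
  rw [hsplit]
  have hexp : Real.sqrt A = Real.exp (-β * t) := by
    have : A = Real.exp (-β * t) ^ 2 := by
      rw [hAdef, sq, ← Real.exp_add]; ring_nf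
    rw [this, Real.sqrt_sq (Real.exp_pos _).le]
  have hsum : Real.sqrt (A * I₀r + C / β) ≤
      Real.exp (-β * t) * Real.sqrt I₀r + Real.sqrt (C / β) := by
    refine (sqrt_add_le_aux (mul_nonneg hA.le hI₀r_nonneg) hB).trans ?_
    rw [Real.sqrt_mul hA.le, hexp]
  exact mul_le_mul_of_nonneg_left hsum (inv_nonneg.mpr (Real.sqrt_nonneg _))

/-- The conclusion of the paper's main theorem (Theorem 2, Stochastic Contraction in `W₂`): if a
Markov kernel `P` on `ℝᵈ × ℝᵈ` satisfies the conditional mean-square contraction estimate,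
and the time-`t` marginal laws `μ_t, ν_t` of `π_t = ∫ P(z₀, ·) dπ₀(z₀)` do not depend on the
choice of coupling `π₀` of `μ₀, ν₀`, then
`W₂(μ_t, ν_t) ≤ α^{-1/2} (e^{-βt} W₂(μ₀, ν₀) + √(C/β))`. -/
theorem stochastic_contraction_wasserstein
    {d : ℕ} (hd : 1 ≤ d) (α β C t : ℝ) (hα : 0 < α) (hβ : 0 < β) (hC : 0 ≤ C) (ht : 0 ≤ t)
    (P : Kernel (EuclideanSpace ℝ (Fin d) × EuclideanSpace ℝ (Fin d))
      (EuclideanSpace ℝ (Fin d) × EuclideanSpace ℝ (Fin d)))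
    [IsMarkovKernel P]
    (hP : ∀ z₀ : EuclideanSpace ℝ (Fin d) × EuclideanSpace ℝ (Fin d),
      (∫⁻ p, (‖p.1 - p.2‖₊ : ℝ≥0∞) ^ 2 ∂(P z₀)) ≤
        ENNReal.ofReal (α⁻¹ * (Real.exp (-2 * β * t) * ‖z₀.1 - z₀.2‖ ^ 2 + C / β)))
    (μ₀ ν₀ : Measure (EuclideanSpace ℝ (Fin d)))
    (hμ₀_prob : IsProbabilityMeasure μ₀) (hν₀_prob : IsProbabilityMeasure ν₀)
    (hμ₀_mom : (∫⁻ x, (‖x‖₊ : ℝ≥0∞) ^ 2 ∂μ₀) < ⊤)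
    (hν₀_mom : (∫⁻ x, (‖x‖₊ : ℝ≥0∞) ^ 2 ∂ν₀) < ⊤)
    (μt νt : Measure (EuclideanSpace ℝ (Fin d)))
    (hmarg : ∀ π₀ : Measure (EuclideanSpace ℝ (Fin d) × EuclideanSpace ℝ (Fin d)),
      IsProbabilityMeasure π₀ → π₀.map Prod.fst = μ₀ → π₀.map Prod.snd = ν₀ →
        (π₀.bind fun z => P z).map Prod.fst = μt ∧
          (π₀.bind fun z => P z).map Prod.snd = νt) :
    W2 μt νt ≤ (Real.sqrt α)⁻¹ * (Real.exp (-β * t) * W2 μ₀ ν₀ + Real.sqrt (C / β)) :=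
  W2_aux α β C t hα hβ hC P hP μ₀ ν₀ hμ₀_prob hν₀_prob hμ₀_mom hν₀_mom μt νt hmarg
end
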